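/- Let T > 0, let λ : [0,T] → [0,∞) be continuous, Λ(t) := ∫₀ᵗ λ(s) ds, and let c > 0. Let θ : [0,T] × ℝ^d × ℝ^d → ℝ be differentiable in (x,ξ) with |∇ₓθ(t,x,ξ)| ≤ c·λ(t)·⟨ξ⟩ and |∇_ξθ(t,x,ξ)| ≤ c·λ(t)·⟨x⟩ for all (t,x,ξ). Suppose q, p : [s, t₀] → ℝ^d (with 0 ≤ s ≤ t₀ ≤ T) are differentiable and solve q'(τ) = ∇_ξθ(τ, q(τ), p(τ)), p'(τ) = −∇ₓθ(τ, q(τ), p(τ)). Then for all s ≤ t ≤ t₀: ⟨p(s)⟩·e^{2c(Λ(s)−Λ(t))} ≤ ⟨p(t)⟩ ≤ ⟨p(s)⟩·e^{2c(Λ(t)−Λ(s))} and ⟨q(s)⟩·e^{2c(Λ(s)−Λ(t))} ≤ ⟨q(t)⟩ ≤ ⟨q(s)⟩·e^{2c(Λ(t)−Λ(s))}. -/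

import Mathlib

/-- `Λ(t) = ∫₀ᵗ λ(s) ds`. -/
noncomputable def Lam (lam : ℝ → ℝ) (t : ℝ) : ℝ := ∫ s in (0:ℝ)..t, lam s

/-- The weight `⟨y⟩ = (e + |y|²)^{1/2}`. -/
noncomputable def jw {d : ℕ} (y : EuclideanSpace ℝ (Fin d)) : ℝ :=
  Real.sqrt (Real.exp 1 + ‖y‖ ^ 2)

lemma jw_pos {d : ℕ} (y : EuclideanSpace ℝ (Fin d)) : 0 < jw y := by
  have : (0:ℝ) < Real.exp 1 + ‖y‖ ^ 2 := by positivity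
  exact Real.sqrt_pos.mpr this

/-- If `|F'| ≤ B'` on the interior, then `|F t - F a| ≤ B t - B a`. -/
lemma mono_helper {a b : ℝ} {F B F' B' : ℝ → ℝ}
    (hFc : ContinuousOn F (Set.Icc a b)) (hBc : ContinuousOn B (Set.Icc a b))
    (hF : ∀ τ ∈ Set.Ioo a b, HasDerivWithinAt F (F' τ) (Set.Ioo a b) τ)
    (hB : ∀ τ ∈ Set.Ioo a b, HasDerivWithinAt B (B' τ) (Set.Ioo a b) τ)
    (hle : ∀ τ ∈ Set.Ioo a b, |F' τ| ≤ B' τ) :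
    ∀ t ∈ Set.Icc a b, |F t - F a| ≤ B t - B a := by
  intro t ht
  have ha : a ∈ Set.Icc a b := ⟨le_refl a, le_trans ht.1 ht.2⟩
  have key : ∀ (G G' : ℝ → ℝ), ContinuousOn G (Set.Icc a b) →
      (∀ τ ∈ Set.Ioo a b, HasDerivWithinAt G (G' τ) (Set.Ioo a b) τ) →
      (∀ τ ∈ Set.Ioo a b, 0 ≤ G' τ) → G a ≤ G t := by
    intro G G' hGc hG hG0
    have hmono := monotoneOn_of_hasDerivWithinAt_nonneg (convex_Icc a b) hGc
      (f' := G') (by rw [interior_Icc]; exact hG) (by rw [interior_Icc]; exact hG0)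
    exact hmono ha ht ht.1
  have h1 : B a - F a ≤ B t - F t := by
    have := key (fun τ => B τ - F τ) (fun τ => B' τ - F' τ) (hBc.sub hFc)
      (fun τ hτ => (hB τ hτ).sub (hF τ hτ))
      (fun τ hτ => by have := abs_le.mp (hle τ hτ); show 0 ≤ B' τ - F' τ; linarith [this.2])
    simpa using this
  have h2 : B a + F a ≤ B t + F t := by
    have := key (fun τ => B τ + F τ) (fun τ => B' τ + F' τ) (hBc.add hFc)
      (fun τ hτ => (hB τ hτ).add (hF τ hτ))
      (fun τ hτ => by have := abs_le.mp (hle τ hτ); show 0 ≤ B' τ + F' τ; linarith [this.1])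
    simpa using this
  rw [abs_le]
  constructor <;> linarith

/-- Gronwall estimate on the logarithm of the weight. -/
lemma weight_log_est {d : ℕ} {a b : ℝ} {m M : ℝ → ℝ}
    {u v : ℝ → EuclideanSpace ℝ (Fin d)}
    (hMc : ContinuousOn M (Set.Icc a b))
    (hM : ∀ τ ∈ Set.Ioo a b, HasDerivWithinAt M (m τ) (Set.Ioo a b) τ)
    (hm : ∀ τ ∈ Set.Icc a b, 0 ≤ m τ)
    (hu : ∀ τ ∈ Set.Icc a b, HasDerivWithinAt u (v τ) (Set.Icc a b) τ)
    (hv : ∀ τ ∈ Set.Icc a b, ‖v τ‖ ≤ m τ * jw (u τ)) :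
    ∀ t ∈ Set.Icc a b, |Real.log (jw (u t)) - Real.log (jw (u a))| ≤ M t - M a := by
  set e1 := Real.exp 1 with he1
  have he : (0:ℝ) < e1 := Real.exp_pos 1
  have hposy : ∀ y : EuclideanSpace ℝ (Fin d), (0:ℝ) < e1 + ‖y‖^2 := fun y => by positivity
  set F : ℝ → ℝ := fun τ => Real.log (e1 + ‖u τ‖ ^ 2) with hFdef
  set F' : ℝ → ℝ := fun τ =>
    (inner ℝ (u τ) (v τ) + inner ℝ (v τ) (u τ) : ℝ) / (e1 + ‖u τ‖ ^ 2) with hF'def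
  -- derivative of F
  have hFder : ∀ τ ∈ Set.Icc a b, HasDerivWithinAt F (F' τ) (Set.Icc a b) τ := by
    intro τ hτ
    have hin : HasDerivWithinAt (fun t => (inner ℝ (u t) (u t) : ℝ))
        ((inner ℝ (u τ) (v τ) : ℝ) + inner ℝ (v τ) (u τ)) (Set.Icc a b) τ :=
      HasDerivWithinAt.inner ℝ (hu τ hτ) (hu τ hτ)
    have hin' : HasDerivWithinAt (fun t => e1 + (inner ℝ (u t) (u t) : ℝ))
        ((inner ℝ (u τ) (v τ) : ℝ) + inner ℝ (v τ) (u τ)) (Set.Icc a b) τ := by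
      exact hin.const_add e1
    have hlog := hin'.log (by
      have := hposy (u τ)
      rw [← real_inner_self_eq_norm_sq] at this
      exact ne_of_gt this)
    simp only [real_inner_self_eq_norm_sq] at hlog
    exact hlog
  have hFc : ContinuousOn F (Set.Icc a b) :=
    fun τ hτ => (hFder τ hτ).continuousWithinAt
  -- basic facts about jw
  have hjw_sq : ∀ y : EuclideanSpace ℝ (Fin d), jw y ^ 2 = e1 + ‖y‖ ^ 2 := fun y =>
    Real.sq_sqrt (le_of_lt (hposy y))
  have hnorm_le : ∀ y : EuclideanSpace ℝ (Fin d), ‖y‖ ≤ jw y := by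
    intro y
    have h1 : ‖y‖ ^ 2 ≤ e1 + ‖y‖ ^ 2 := by linarith [he]
    calc ‖y‖ = Real.sqrt (‖y‖ ^ 2) := by rw [Real.sqrt_sq (norm_nonneg y)]
      _ ≤ Real.sqrt (e1 + ‖y‖ ^ 2) := Real.sqrt_le_sqrt h1
      _ = jw y := rfl
  -- bound on F'
  have hbound : ∀ τ ∈ Set.Icc a b, |F' τ| ≤ 2 * m τ := by
    intro τ hτ
    have hd := hposy (u τ)
    have hip : |(inner ℝ (v τ) (u τ) : ℝ)| ≤ ‖v τ‖ * ‖u τ‖ := abs_real_inner_le_norm _ _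
    have hcomm : (inner ℝ (u τ) (v τ) : ℝ) = inner ℝ (v τ) (u τ) := real_inner_comm _ _
    have hmτ := hm τ hτ
    have hvτ := hv τ hτ
    have hjw := jw_pos (u τ)
    have hsq := hjw_sq (u τ)
    have hnl := hnorm_le (u τ)
    rw [hF'def]
    simp only [hcomm]
    rw [abs_div, abs_of_pos hd, div_le_iff₀ hd]
    have h1 : |(inner ℝ (v τ) (u τ) : ℝ) + inner ℝ (v τ) (u τ)| ≤ 2 * (‖v τ‖ * ‖u τ‖) := by
      calc |(inner ℝ (v τ) (u τ) : ℝ) + inner ℝ (v τ) (u τ)|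
          ≤ |(inner ℝ (v τ) (u τ) : ℝ)| + |(inner ℝ (v τ) (u τ) : ℝ)| := abs_add_le _ _
        _ ≤ 2 * (‖v τ‖ * ‖u τ‖) := by linarith
    have h2 : ‖v τ‖ * ‖u τ‖ ≤ m τ * (e1 + ‖u τ‖ ^ 2) := by
      have : ‖v τ‖ * ‖u τ‖ ≤ (m τ * jw (u τ)) * jw (u τ) := by
        apply mul_le_mul hvτ hnl (norm_nonneg _)
        positivity
      calc ‖v τ‖ * ‖u τ‖ ≤ (m τ * jw (u τ)) * jw (u τ) := this
        _ = m τ * jw (u τ) ^ 2 := by ring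
        _ = m τ * (e1 + ‖u τ‖ ^ 2) := by rw [hsq]
    calc |(inner ℝ (v τ) (u τ) : ℝ) + inner ℝ (v τ) (u τ)| ≤ 2 * (‖v τ‖ * ‖u τ‖) := h1
      _ ≤ 2 * (m τ * (e1 + ‖u τ‖ ^ 2)) := by linarith
      _ = 2 * m τ * (e1 + ‖u τ‖ ^ 2) := by ring
  -- apply mono_helper with B = 2M
  have hmain := mono_helper (B := fun τ => 2 * M τ) (F' := F') (B' := fun τ => 2 * m τ)
    hFc (hMc.const_smul (2:ℝ))
    (fun τ hτ => (hFder τ (Set.Ioo_subset_Icc_self hτ)).mono Set.Ioo_subset_Icc_self)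
    (fun τ hτ => (hM τ hτ).const_mul 2)
    (fun τ hτ => hbound τ (Set.Ioo_subset_Icc_self hτ))
  intro t ht
  have hlogjw : ∀ y : EuclideanSpace ℝ (Fin d),
      Real.log (jw y) = Real.log (e1 + ‖y‖ ^ 2) / 2 := fun y =>
    Real.log_sqrt (le_of_lt (hposy y))
  have h := hmain t ht
  rw [hlogjw, hlogjw]
  have h' := abs_le.mp h
  simp only [hFdef] at h'
  rw [abs_le]
  constructor <;> [linarith [h'.1]; linarith [h'.2]]

/-- From the logarithmic estimate to the exponential sandwich. -/
lemma exp_sandwich {A B K : ℝ} (hA : 0 < A) (hB : 0 < B)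
    (h : |Real.log B - Real.log A| ≤ K) :
    A * Real.exp (-(2 * K)) ≤ B ∧ B ≤ A * Real.exp (2 * K) := by
  have hK : 0 ≤ K := le_trans (abs_nonneg _) h
  have h' := abs_le.mp h
  have eA1 : A * Real.exp (-(2 * K)) = Real.exp (Real.log A + -(2 * K)) := by
    rw [Real.exp_add, Real.exp_log hA]
  have eA2 : A * Real.exp (2 * K) = Real.exp (Real.log A + 2 * K) := by
    rw [Real.exp_add, Real.exp_log hA]
  have eB : B = Real.exp (Real.log B) := (Real.exp_log hB).symm
  constructor
  · rw [eA1, eB]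
    exact Real.exp_le_exp.mpr (by linarith [h'.1])
  · rw [eA2]
    nth_rewrite 1 [eB]
    exact Real.exp_le_exp.mpr (by linarith [h'.2])

/-- The Gronwall estimate on the Hamiltonian flow from the proof of Lemma 5.2 of the
paper: `⟨p(s)⟩e^{2c(Λ(s)−Λ(t))} ≤ ⟨p(t)⟩ ≤ ⟨p(s)⟩e^{2c(Λ(t)−Λ(s))}`, and the same
for `q`. -/
theorem hamiltonian_flow_gronwall
    (d : ℕ) (T : ℝ) (hT : 0 < T) (lam : ℝ → ℝ)
    (hcont : ContinuousOn lam (Set.Icc 0 T))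
    (hnn : ∀ t ∈ Set.Icc 0 T, 0 ≤ lam t)
    (c : ℝ) (hc : 0 < c)
    (θ : ℝ → EuclideanSpace ℝ (Fin d) → EuclideanSpace ℝ (Fin d) → ℝ)
    (hdiffx : ∀ t ∈ Set.Icc 0 T, ∀ (x ξ : EuclideanSpace ℝ (Fin d)),
      DifferentiableAt ℝ (fun x' => θ t x' ξ) x)
    (hdiffξ : ∀ t ∈ Set.Icc 0 T, ∀ (x ξ : EuclideanSpace ℝ (Fin d)),
      DifferentiableAt ℝ (fun ξ' => θ t x ξ') ξ)
    (hgx : ∀ t ∈ Set.Icc 0 T, ∀ (x ξ : EuclideanSpace ℝ (Fin d)),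
      ‖gradient (fun x' => θ t x' ξ) x‖ ≤ c * lam t * jw ξ)
    (hgξ : ∀ t ∈ Set.Icc 0 T, ∀ (x ξ : EuclideanSpace ℝ (Fin d)),
      ‖gradient (fun ξ' => θ t x ξ') ξ‖ ≤ c * lam t * jw x)
    (s t₀ : ℝ) (hs : 0 ≤ s) (hst : s ≤ t₀) (ht₀ : t₀ ≤ T)
    (q p : ℝ → EuclideanSpace ℝ (Fin d))
    (hq : ∀ τ ∈ Set.Icc s t₀, HasDerivWithinAt q
      (gradient (fun ξ' => θ τ (q τ) ξ') (p τ)) (Set.Icc s t₀) τ)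
    (hp : ∀ τ ∈ Set.Icc s t₀, HasDerivWithinAt p
      (-(gradient (fun x' => θ τ x' (p τ)) (q τ))) (Set.Icc s t₀) τ) :
    ∀ t ∈ Set.Icc s t₀,
      jw (p s) * Real.exp (2 * c * (Lam lam s - Lam lam t)) ≤ jw (p t) ∧
      jw (p t) ≤ jw (p s) * Real.exp (2 * c * (Lam lam t - Lam lam s)) ∧
      jw (q s) * Real.exp (2 * c * (Lam lam s - Lam lam t)) ≤ jw (q t) ∧
      jw (q t) ≤ jw (q s) * Real.exp (2 * c * (Lam lam t - Lam lam s)) := by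
  have hsub : Set.Icc s t₀ ⊆ Set.Icc 0 T := Set.Icc_subset_Icc hs ht₀
  -- `M := c • Λ` : continuity on `[s,t₀]` and derivative `c * λ` on the interior.
  have hLamc : ContinuousOn (Lam lam) (Set.Icc s t₀) := by
    have hTuIcc : Set.uIcc (0:ℝ) T = Set.Icc 0 T := Set.uIcc_of_le (le_of_lt hT)
    have hint : IntervalIntegrable lam MeasureTheory.volume 0 T := by
      apply ContinuousOn.intervalIntegrable
      rwa [hTuIcc]
    have := intervalIntegral.continuousOn_primitive_interval'
      (μ := MeasureTheory.volume) hint (by rw [hTuIcc]; exact ⟨le_refl 0, le_of_lt hT⟩)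
    rw [hTuIcc] at this
    exact (this.mono hsub : ContinuousOn _ _)
  have hMc : ContinuousOn (fun τ => c * Lam lam τ) (Set.Icc s t₀) :=
    hLamc.const_smul c
  have hM : ∀ τ ∈ Set.Ioo s t₀,
      HasDerivWithinAt (fun τ => c * Lam lam τ) (c * lam τ) (Set.Ioo s t₀) τ := by
    intro τ hτ
    have hτoo : τ ∈ Set.Ioo (0:ℝ) T := ⟨lt_of_le_of_lt hs hτ.1, lt_of_lt_of_le hτ.2 ht₀⟩
    have hmemτ : Set.Icc (0:ℝ) T ∈ nhds τ := Icc_mem_nhds hτoo.1 hτoo.2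
    have hcontAt : ContinuousAt lam τ :=
      (hcont τ (Set.Ioo_subset_Icc_self hτoo)).continuousAt hmemτ
    have hint : IntervalIntegrable lam MeasureTheory.volume 0 τ := by
      apply ContinuousOn.intervalIntegrable
      apply hcont.mono
      rw [Set.uIcc_of_le (le_of_lt hτoo.1)]
      exact Set.Icc_subset_Icc (le_refl 0) (le_of_lt hτoo.2)
    have hmeas : StronglyMeasurableAtFilter lam (nhds τ) MeasureTheory.volume :=
      ⟨Set.Icc 0 T, hmemτ, hcont.aestronglyMeasurable measurableSet_Icc⟩
    have hL : HasDerivAt (Lam lam) (lam τ) τ :=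
      intervalIntegral.integral_hasDerivAt_right hint hmeas hcontAt
    exact ((hL.const_mul c).hasDerivWithinAt)
  have hm : ∀ τ ∈ Set.Icc s t₀, 0 ≤ c * lam τ := fun τ hτ =>
    mul_nonneg (le_of_lt hc) (hnn τ (hsub hτ))
  -- apply the log estimate to `p` and `q`
  have hP := weight_log_est (u := p)
    (v := fun τ => -(gradient (fun x' => θ τ x' (p τ)) (q τ)))
    (m := fun τ => c * lam τ) hMc hM hm hp
    (fun τ hτ => by
      rw [norm_neg]; exact hgx τ (hsub hτ) (q τ) (p τ))
  have hQ := weight_log_est (u := q)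
    (v := fun τ => gradient (fun ξ' => θ τ (q τ) ξ') (p τ))
    (m := fun τ => c * lam τ) hMc hM hm hq
    (fun τ hτ => hgξ τ (hsub hτ) (q τ) (p τ))
  intro t ht
  have hPt := hP t ht
  have hQt := hQ t ht
  have hEp := exp_sandwich (jw_pos (p s)) (jw_pos (p t)) hPt
  have hEq := exp_sandwich (jw_pos (q s)) (jw_pos (q t)) hQt
  have e1 : 2 * c * (Lam lam s - Lam lam t) = -(2 * (c * Lam lam t - c * Lam lam s)) := by
    ring
  have e2 : 2 * c * (Lam lam t - Lam lam s) = 2 * (c * Lam lam t - c * Lam lam s) := by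
    ring
  rw [e1, e2]
  exact ⟨hEp.1, hEp.2, hEq.1, hEq.2⟩
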